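/- For λ > 0, vectors φ₁,…,φ_n ∈ ℝ^p, the leave-one-out resolvent perturbation of the trace against a PSD matrix R is bounded: |Tr(G R) − Tr(G^μ R)| ≤ ‖R‖_op · ‖G^μ φ_μ‖² / (1 + φ_μ^⊤ G^μ φ_μ) ≤ ‖R‖_op / λ, where G and G^μ are as in the leave-one-out identity. -/

import Mathlib

open Matrix

open RealInnerProductSpace

lemma my_vecMulVec_mul {p q r : ℕ} (a : Fin p → ℝ) (b : Fin q → ℝ)
    (M : Matrix (Fin q) (Fin r) ℝ) :
    vecMulVec a b * M = vecMulVec a (b ᵥ* M) := by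
  ext i j
  simp [mul_apply, vecMulVec_apply, vecMul, dotProduct, Finset.mul_sum, mul_assoc]

lemma my_mul_vecMulVec {p q r : ℕ} (M : Matrix (Fin p) (Fin q) ℝ)
    (a : Fin q → ℝ) (b : Fin r → ℝ) :
    M * vecMulVec a b = vecMulVec (M *ᵥ a) b := by
  ext i j
  simp [mul_apply, vecMulVec_apply, mulVec, dotProduct, Finset.sum_mul, mul_assoc]

lemma my_vecMul_vecMulVec {p q : ℕ} (b c : Fin p → ℝ) (d : Fin q → ℝ) :
    b ᵥ* vecMulVec c d = (b ⬝ᵥ c) • d := by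
  ext j
  simp [vecMul, vecMulVec_apply, dotProduct, Finset.sum_mul, mul_assoc]

lemma my_trace_vecMulVec {p : ℕ} (a b : Fin p → ℝ) :
    (vecMulVec a b).trace = a ⬝ᵥ b := by
  simp [trace, vecMulVec_apply, dotProduct, diag]

lemma my_mulVec_vecMulVec {p : ℕ} (x y : Fin p → ℝ) :
    vecMulVec x x *ᵥ y = (x ⬝ᵥ y) • x := by
  ext i
  simp [mulVec, vecMulVec_apply, dotProduct, Finset.mul_sum, mul_assoc, mul_comm, mul_left_comm]

lemma my_posSemidef_vecMulVec {p : ℕ} (x : Fin p → ℝ) :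
    (vecMulVec x x).PosSemidef := by
  rw [posSemidef_iff_dotProduct_mulVec]
  constructor
  · ext i j
    simp [conjTranspose, vecMulVec_apply, mul_comm]
  · intro y
    rw [my_mulVec_vecMulVec]
    have : star y ⬝ᵥ (x ⬝ᵥ y) • x = (x ⬝ᵥ y) * (x ⬝ᵥ y) := by
      simp [dotProduct_smul, dotProduct_comm, star_trivial, mul_comm]
    rw [this]
    exact mul_self_nonneg _



/-- Leave-one-out resolvent trace perturbation bound: for `λ > 0`, real features
`φ_ν ∈ ℝ^p` and a positive semidefinite matrix `R`, with
`G = (Σ_ν φ_ν φ_νᵀ + λI)⁻¹`, `G^μ = (Σ_{ν≠μ} φ_ν φ_νᵀ + λI)⁻¹`,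
`|Tr(GR) − Tr(G^μ R)| ≤ ‖R‖_op ‖G^μ φ_μ‖² / (1 + φ_μᵀ G^μ φ_μ) ≤ ‖R‖_op / λ`. -/
theorem leave_one_out_trace_bound {n p : ℕ}
    (φ : Fin n → Fin p → ℝ) (lam : ℝ) (hlam : 0 < lam) (μ : Fin n)
    (R : Matrix (Fin p) (Fin p) ℝ) (hR : R.PosSemidef)
    (G Gμ : Matrix (Fin p) (Fin p) ℝ)
    (hG : G = (∑ ν, vecMulVec (φ ν) (φ ν)
        + lam • (1 : Matrix (Fin p) (Fin p) ℝ))⁻¹)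
    (hGμ : Gμ = (∑ ν ∈ Finset.univ.erase μ, vecMulVec (φ ν) (φ ν)
        + lam • (1 : Matrix (Fin p) (Fin p) ℝ))⁻¹) :
    |(G * R).trace - (Gμ * R).trace|
      ≤ ‖Matrix.toEuclideanCLM (𝕜 := ℝ) R‖ * (∑ i, (Gμ *ᵥ φ μ) i ^ 2)
          / (1 + φ μ ⬝ᵥ (Gμ *ᵥ φ μ))
    ∧ ‖Matrix.toEuclideanCLM (𝕜 := ℝ) R‖ * (∑ i, (Gμ *ᵥ φ μ) i ^ 2)
          / (1 + φ μ ⬝ᵥ (Gμ *ᵥ φ μ))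
      ≤ ‖Matrix.toEuclideanCLM (𝕜 := ℝ) R‖ / lam := by
  set u : Fin p → ℝ := φ μ with hu
  set M : Matrix (Fin p) (Fin p) ℝ := ∑ ν ∈ Finset.univ.erase μ, vecMulVec (φ ν) (φ ν) with hM
  set A : Matrix (Fin p) (Fin p) ℝ := M + lam • 1 with hA
  have hMpsd : M.PosSemidef :=
    Finset.sum_induction _ _ (fun a b ha hb => ha.add hb) (Matrix.PosSemidef.zero)
      (fun ν _ => my_posSemidef_vecMulVec (φ ν))
  have hlamI : (lam • (1 : Matrix (Fin p) (Fin p) ℝ)).PosDef := by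
    rw [posDef_iff_dotProduct_mulVec]
    constructor
    · simp [Matrix.IsHermitian, Matrix.conjTranspose_smul]
    · intro x hx
      have hpos : 0 < star x ⬝ᵥ x := Matrix.dotProduct_star_self_pos_iff.mpr hx
      have : (lam • (1 : Matrix (Fin p) (Fin p) ℝ)) *ᵥ x = lam • x := by
        rw [Matrix.smul_mulVec, Matrix.one_mulVec]
      rw [this]
      calc (0:ℝ) < lam * (star x ⬝ᵥ x) := by positivity
        _ = star x ⬝ᵥ lam • x := by rw [dotProduct_smul, smul_eq_mul]
  have hApos : A.PosDef := Matrix.PosDef.posSemidef_add hMpsd hlamI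
  have hAdet : IsUnit A.det := hApos.det_pos.ne'.isUnit
  have hAGμ : A * Gμ = 1 := by rw [hGμ]; exact Matrix.mul_nonsing_inv _ hAdet
  have hGμherm : Gμ.IsHermitian := by rw [hGμ]; exact hApos.1.inv
  have hGμt : Gμᵀ = Gμ := by
    ext i j
    have := congrFun (congrFun hGμherm.eq i) j
    simpa [Matrix.conjTranspose_apply] using this
  have hRt : Rᵀ = R := by
    ext i j
    have := congrFun (congrFun hR.1.eq i) j
    simpa [Matrix.conjTranspose_apply] using this
  have hGμpsd : Gμ.PosSemidef := by rw [hGμ]; exact hApos.inv.posSemidef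
  set v : Fin p → ℝ := Gμ *ᵥ u with hv
  set c : ℝ := u ⬝ᵥ v with hc
  have hc0 : 0 ≤ c := by simpa [hc, hv] using hGμpsd.dotProduct_mulVec_nonneg u
  have h1c : (0:ℝ) < 1 + c := by linarith
  set k : ℝ := (1 + c)⁻¹ with hk
  have hk0 : 0 < k := inv_pos.mpr h1c
  have hw : u ᵥ* Gμ = v := by rw [← hGμt, Matrix.vecMul_transpose]
  have hAv : A *ᵥ v = u := by rw [hv, Matrix.mulVec_mulVec, hAGμ, Matrix.one_mulVec]
  -- Sherman-Morrison
  have hSM : G = Gμ - k • vecMulVec v v := by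
    have hB : (∑ ν, vecMulVec (φ ν) (φ ν) + lam • (1 : Matrix (Fin p) (Fin p) ℝ))
        = A + vecMulVec u u := by
      rw [hA, hM, ← Finset.sum_erase_add Finset.univ _ (Finset.mem_univ μ), hu]
      abel
    rw [hG, hB]
    apply Matrix.inv_eq_right_inv
    have e1 : A * vecMulVec v v = vecMulVec u v := by
      rw [my_mul_vecMulVec, hAv]
    have e2 : vecMulVec u u * Gμ = vecMulVec u v := by
      rw [my_vecMulVec_mul, hw]
    have e3 : vecMulVec u u * vecMulVec v v = c • vecMulVec u v := by
      rw [my_vecMulVec_mul, my_vecMul_vecMulVec, ← hc]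
      ext i j
      simp [vecMulVec_apply, mul_comm, mul_left_comm]
    have h0 : (1:ℝ) - k - k * c = 0 := by
      rw [hk]
      field_simp
      ring
    calc (A + vecMulVec u u) * (Gμ - k • vecMulVec v v)
        = A * Gμ - k • (A * vecMulVec v v) + (vecMulVec u u * Gμ
            - k • (vecMulVec u u * vecMulVec v v)) := by
          rw [add_mul, mul_sub, mul_sub, Matrix.mul_smul, Matrix.mul_smul]
      _ = 1 - k • vecMulVec u v + (vecMulVec u v - (k * c) • vecMulVec u v) := by
          rw [hAGμ, e1, e2, e3, smul_smul]
      _ = 1 + ((1 - k - k * c) • vecMulVec u v) := by module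
      _ = 1 := by rw [h0, zero_smul, add_zero]
  set t : ℝ := v ⬝ᵥ R *ᵥ v with htdef
  have ht0 : 0 ≤ t := by simpa [htdef] using hR.dotProduct_mulVec_nonneg v
  have htr : (G * R).trace - (Gμ * R).trace = -(k * t) := by
    rw [hSM, sub_mul, Matrix.smul_mul, Matrix.trace_sub, Matrix.trace_smul]
    have e4 : vecMulVec v v * R = vecMulVec v (R *ᵥ v) := by
      rw [my_vecMulVec_mul, ← Matrix.mulVec_transpose, hRt]
    rw [e4, my_trace_vecMulVec, ← htdef, smul_eq_mul]
    ring
  set S : ℝ := ∑ i, v i ^ 2 with hS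
  have hvvS : v ⬝ᵥ v = S := by
    simp [dotProduct, hS, sq]
  set T := Matrix.toEuclideanCLM (𝕜 := ℝ) R with hT
  -- operator norm bound: t ≤ ‖T‖ * S
  have hts : t ≤ ‖T‖ * S := by
    set x : EuclideanSpace ℝ (Fin p) := (WithLp.equiv 2 _).symm v with hx
    have h1 : t = ⟪x, T x⟫ := by
      rw [hT, hx, WithLp.equiv_symm_apply, Matrix.toEuclideanCLM_toLp]
      simp [PiLp.inner_apply, RCLike.inner_apply, dotProduct, Matrix.toLin'_apply, htdef, mul_comm]
    have h2 : S = ‖x‖ ^ 2 := by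
      rw [hx, WithLp.equiv_symm_apply, EuclideanSpace.norm_sq_eq]
      simp [hS]
    calc t = ⟪x, T x⟫ := h1
      _ ≤ ‖x‖ * ‖T x‖ := real_inner_le_norm _ _
      _ ≤ ‖x‖ * (‖T‖ * ‖x‖) := by
          have := T.le_opNorm x
          have hx0 : (0:ℝ) ≤ ‖x‖ := norm_nonneg _
          nlinarith [norm_nonneg (T x)]
      _ = ‖T‖ * S := by rw [h2]; ring
    -- done
  -- λ S ≤ c
  have hlamS : lam * S ≤ c := by
    have h5 : c = v ⬝ᵥ A *ᵥ v := by
      rw [hAv, hc, dotProduct_comm]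
    have h6 : v ⬝ᵥ A *ᵥ v = v ⬝ᵥ M *ᵥ v + lam * S := by
      rw [hA, Matrix.add_mulVec, dotProduct_add, Matrix.smul_mulVec,
        Matrix.one_mulVec, dotProduct_smul, hvvS, smul_eq_mul]
    have h7 : 0 ≤ v ⬝ᵥ M *ᵥ v := by simpa using hMpsd.dotProduct_mulVec_nonneg v
    linarith [h5 ▸ h6]
  have hS0 : 0 ≤ S := Finset.sum_nonneg fun i _ => sq_nonneg _
  have hTnn : (0:ℝ) ≤ ‖T‖ := norm_nonneg _
  have hfrac : S / (1 + c) ≤ 1 / lam := by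
    rw [div_le_div_iff₀ h1c hlam]
    nlinarith
  constructor
  · rw [htr, abs_neg, abs_of_nonneg (by positivity)]
    have : ‖T‖ * S / (1 + c) = (‖T‖ * S) * k := by
      rw [hk]; ring
    rw [this]
    have : k * t ≤ k * (‖T‖ * S) := by
      exact mul_le_mul_of_nonneg_left hts hk0.le
    linarith
  · calc ‖T‖ * S / (1 + c) = ‖T‖ * (S / (1 + c)) := by ring
      _ ≤ ‖T‖ * (1 / lam) := mul_le_mul_of_nonneg_left hfrac hTnn
      _ = ‖T‖ / lam := by ring
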